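/- Let k be a perfect field of characteristic 5, let W(k) be the ring of Witt vectors of k, and let K be the fraction field of W(k). Then no element x of K satisfies x^2 - 123x + 1 = 0, no element x of K satisfies 121x^2 - 121x - 1 = 0, and no element x of K satisfies x^2 + 121x - 121 = 0. -/

import Mathlib

set_option linter.unusedSectionVars false

section Aux

variable (k : Type*) [Field k] [CharP k 5] [PerfectField k] [Fact (Nat.Prime 5)]
  (K : Type*) [Field K] [Algebra (WittVector 5 k) K] [IsFractionRing (WittVector 5 k) K]

include k in
lemma aux_five_ne_zero : (5 : K) ≠ 0 := by
  have h5 : (5 : WittVector 5 k) ≠ 0 := WittVector.p_nonzero 5 k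
  intro h
  apply h5
  apply IsFractionRing.injective (WittVector 5 k) K
  rw [map_ofNat, map_zero, h]

include k in
lemma aux_eleven_ne_zero : (11 : K) ≠ 0 := by
  have h11 : (11 : WittVector 5 k) ≠ 0 := by
    intro h
    have : (WittVector.constantCoeff : WittVector 5 k →+* k) 11 = 0 := by
      rw [h, map_zero]
    rw [map_ofNat] at this
    have : (11 : k) = 0 := this
    have h1 : (11 : k) = 1 := by
      have := CharP.cast_eq_zero k 5
      linear_combination 2 * this
    rw [h1] at this
    exact one_ne_zero this
  intro h
  apply h11
  apply IsFractionRing.injective (WittVector 5 k) K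
  rw [map_ofNat, map_zero, h]

include k in
lemma aux_no_sqrt_five : ¬∃ y : K, y ^ 2 = 5 := by
  rintro ⟨y, hy⟩
  haveI : IsDiscreteValuationRing (WittVector 5 k) := WittVector.isDiscreteValuationRing
  have hprime : Prime (5 : WittVector 5 k) :=
    (WittVector.irreducible (k := k) 5).prime
  -- y is integral over W(k)
  have hint : IsIntegral (WittVector 5 k) y := by
    refine ⟨Polynomial.X ^ 2 - Polynomial.C 5, Polynomial.monic_X_pow_sub_C 5 two_ne_zero, ?_⟩
    simp [Polynomial.eval₂_sub, hy, map_ofNat]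
  obtain ⟨z, hz⟩ := IsIntegrallyClosed.isIntegral_iff.mp hint
  have hz2 : z ^ 2 = 5 := by
    apply IsFractionRing.injective (WittVector 5 k) K
    rw [map_pow, hz, hy, map_ofNat]
  -- 5 prime, so not a square
  have hdvd : (5 : WittVector 5 k) ∣ z := by
    have : (5 : WittVector 5 k) ∣ z * z := ⟨1, by rw [mul_one]; linear_combination hz2⟩
    rcases hprime.2.2 z z this with h | h <;> exact h
  obtain ⟨w, hw⟩ := hdvd
  have h5 : (5 : WittVector 5 k) ≠ 0 := WittVector.p_nonzero 5 k
  have : (5 : WittVector 5 k) * (5 * w ^ 2 - 1) = 0 := by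
    linear_combination hz2 - (z + 5 * w) * hw
  rcases mul_eq_zero.mp this with h | h
  · exact h5 h
  · have : IsUnit (5 : WittVector 5 k) := IsUnit.of_mul_eq_one (w ^ 2) (by linear_combination h)
    exact hprime.2.1 this

end Aux

/-- Let `k` be a perfect field of characteristic 5, `W(k)` the ring of (5-typical) Witt
vectors of `k`, and `K` the fraction field of `W(k)`. Then no element `x` of `K` satisfies
`x² - 123x + 1 = 0`, none satisfies `121x² - 121x - 1 = 0`, and none satisfies
`x² + 121x - 121 = 0`. -/
theorem stmt_11 (k : Type*) [Field k] [CharP k 5] [PerfectField k]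
    [Fact (Nat.Prime 5)]
    (K : Type*) [Field K] [Algebra (WittVector 5 k) K]
    [IsFractionRing (WittVector 5 k) K] :
    (¬∃ x : K, x ^ 2 - 123 * x + 1 = 0) ∧
    (¬∃ x : K, 121 * x ^ 2 - 121 * x - 1 = 0) ∧
    (¬∃ x : K, x ^ 2 + 121 * x - 121 = 0) := by
  have h5 : (5 : K) ≠ 0 := aux_five_ne_zero k K
  have h11 : (11 : K) ≠ 0 := aux_eleven_ne_zero k K
  have h55 : (55 : K) ≠ 0 := by
    have : (55 : K) = 5 * 11 := by norm_num
    rw [this]; exact mul_ne_zero h5 h11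
  have hns := aux_no_sqrt_five k K
  refine ⟨?_, ?_, ?_⟩
  · rintro ⟨x, hx⟩
    exact hns ⟨(2 * x - 123) / 55, by field_simp; linear_combination 4 * hx⟩
  · rintro ⟨x, hx⟩
    exact hns ⟨(22 * x - 11) / 5, by field_simp; linear_combination 4 * hx⟩
  · rintro ⟨x, hx⟩
    exact hns ⟨(2 * x + 121) / 55, by field_simp; linear_combination 4 * hx⟩
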